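/- Key counting step of the subsampling lemma: for a uniformly random subset J of size n drawn from {1,…,t} and a fixed index i, Pr[B(D) ∈ F ∧ i ∈ J] ≤ (n/t)·e^{ε*}·Pr[A(D'_J) ∈ F | i ∉ J] + (n/t)·δ, where D, D' are neighboring databases differing at index i and A is (ε*, δ)-differentially private. -/

import Mathlib

/-- Key counting step of the subsampling lemma:
`Pr[B(D) ∈ F ∧ i ∈ J] ≤ (n/t)·e^{ε*}·Pr[A(D'_J) ∈ F | i ∉ J] + (n/t)·δ`,
where `J` is a uniformly random size-`n` subset of `[t]`, and `D, D'` are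
neighboring databases differing at index `i`. -/
theorem stmt7 {X Ω : Type*} (n t : ℕ) (hn : 1 ≤ n) (hnt : n < t)
    (εs δ : ℝ) (hδ : 0 ≤ δ)
    (A : Multiset X → Set Ω → ℝ)
    (hA0 : ∀ D F, 0 ≤ A D F) (hA1 : ∀ D F, A D F ≤ 1)
    (hDP : ∀ (m : Multiset X) (x y : X), Multiset.card m = n - 1 →
      ∀ F : Set Ω, A (x ::ₘ m) F ≤ Real.exp εs * A (y ::ₘ m) F + δ)
    (D D' : Fin t → X) (i : Fin t) (heq : ∀ j, j ≠ i → D j = D' j) (F : Set Ω) :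
    (∑ J ∈ (Finset.powersetCard n (Finset.univ : Finset (Fin t))).filter
          (fun J => i ∈ J),
        A (Multiset.map D J.val) F) /
      ((Finset.powersetCard n (Finset.univ : Finset (Fin t))).card : ℝ)
      ≤ ((n : ℝ) / t) * Real.exp εs *
          ((∑ J ∈ (Finset.powersetCard n (Finset.univ : Finset (Fin t))).filter
                (fun J => i ∉ J),
              A (Multiset.map D' J.val) F) /
            (((Finset.powersetCard n (Finset.univ : Finset (Fin t))).filter
                (fun J => i ∉ J)).card : ℝ))
        + ((n : ℝ) / t) * δ := by
  classical
  set S : Finset (Finset (Fin t)) := Finset.powersetCard n (Finset.univ : Finset (Fin t))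
    with hSdef
  set S1 := S.filter (fun J => i ∈ J) with hS1def
  set S2 := S.filter (fun J => i ∉ J) with hS2def
  have hmemS : ∀ J : Finset (Fin t), J ∈ S ↔ J.card = n := by
    intro J; simp [hSdef, Finset.mem_powersetCard]
  -- cardinalities
  have hNcard : S.card = t.choose n := by
    rw [hSdef, Finset.card_powersetCard, Finset.card_univ, Fintype.card_fin]
  have hS2eq : S2 = Finset.powersetCard n (Finset.univ.erase i) := by
    ext J
    simp only [hS2def, Finset.mem_filter, hmemS, Finset.mem_powersetCard,
      Finset.subset_erase, Finset.subset_univ, true_and]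
    tauto
  have hMcard : S2.card = (t - 1).choose n := by
    rw [hS2eq, Finset.card_powersetCard, Finset.card_erase_of_mem (Finset.mem_univ i),
      Finset.card_univ, Fintype.card_fin]
  have hid : (t - n) * t.choose n = t * (t - 1).choose n := by
    obtain ⟨m, rfl⟩ : ∃ m, t = m + 1 := ⟨t - 1, by omega⟩
    have h1 := Nat.add_one_mul_choose_eq m n
    have h2 := Nat.choose_succ_right_eq (m + 1) n
    calc (m + 1 - n) * (m + 1).choose n = (m + 1).choose n * (m + 1 - n) := mul_comm _ _
      _ = (m + 1).choose (n + 1) * (n + 1) := h2.symm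
      _ = (m + 1) * m.choose n := h1.symm
      _ = (m + 1 - 0) * (m + 1 - 1).choose n := by simp
  -- abbreviation for the right-hand side integrand
  set g : Finset (Fin t) → ℝ := fun Q => Real.exp εs * A (Multiset.map D' Q.val) F + δ
    with hg
  -- counting on the left
  have hleft : ((t - n : ℕ) : ℝ) * ∑ J ∈ S1, A (Multiset.map D J.val) F
      = ∑ J ∈ S1, ∑ _j ∈ Jᶜ, A (Multiset.map D J.val) F := by
    rw [Finset.mul_sum]
    refine Finset.sum_congr rfl fun J hJ => ?_
    rw [Finset.sum_const, Finset.card_compl, Fintype.card_fin,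
      (hmemS J).mp (Finset.mem_filter.mp hJ).1, nsmul_eq_mul]
  -- pointwise DP bound
  have hpt : ∀ J ∈ S1, ∀ j ∈ Jᶜ,
      A (Multiset.map D J.val) F ≤ g (insert j (J.erase i)) := by
    intro J hJ j hj
    obtain ⟨hJS, hiJ⟩ := Finset.mem_filter.mp hJ
    have hJcard := (hmemS J).mp hJS
    have hjJ : j ∉ J := Finset.mem_compl.mp hj
    have hji : j ≠ i := fun h => hjJ (h ▸ hiJ)
    have hjE : j ∉ J.erase i := fun h => hjJ (Finset.mem_of_mem_erase h)
    have hiE : i ∉ J.erase i := Finset.notMem_erase i J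
    have hm : Multiset.card (Multiset.map D (J.erase i).val) = n - 1 := by
      rw [Multiset.card_map]
      have : (J.erase i).card = n - 1 := by
        rw [Finset.card_erase_of_mem hiJ, hJcard]
      exact this
    have hJval : J.val = i ::ₘ (J.erase i).val := by
      conv_lhs => rw [← Finset.insert_erase hiJ]
      rw [Finset.insert_val_of_notMem hiE]
    have hQval : (insert j (J.erase i)).val = j ::ₘ (J.erase i).val :=
      Finset.insert_val_of_notMem hjE
    have hmapeq : Multiset.map D' (J.erase i).val = Multiset.map D (J.erase i).val := by
      refine Multiset.map_congr rfl fun x hx => ?_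
      have hxi : x ≠ i := Finset.ne_of_mem_erase (Finset.mem_val.mp hx)
      exact (heq x hxi).symm
    rw [hg]
    simp only [hQval, Multiset.map_cons, hmapeq]
    rw [hJval, Multiset.map_cons]
    exact hDP _ (D i) (D' j) hm F
  -- reindexing (the double-counting bijection)
  have hreindex : ∑ J ∈ S1, ∑ j ∈ Jᶜ, g (insert j (J.erase i))
      = ∑ Q ∈ S2, ∑ _j ∈ Q, g Q := by
    rw [Finset.sum_sigma' S1 (fun J => Jᶜ) (fun J j => g (insert j (J.erase i))),
      Finset.sum_sigma' S2 (fun Q => Q) (fun Q _j => g Q)]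
    refine Finset.sum_nbij' (fun p => ⟨insert p.2 (p.1.erase i), p.2⟩)
      (fun p => ⟨insert i (p.1.erase p.2), p.2⟩) ?_ ?_ ?_ ?_ ?_
    · rintro ⟨J, j⟩ hp
      simp only [Finset.mem_sigma] at hp ⊢
      obtain ⟨hJ, hj⟩ := hp
      obtain ⟨hJS, hiJ⟩ := Finset.mem_filter.mp hJ
      have hJcard := (hmemS J).mp hJS
      have hjJ : j ∉ J := Finset.mem_compl.mp hj
      have hji : j ≠ i := fun h => hjJ (h ▸ hiJ)
      have hjE : j ∉ J.erase i := fun h => hjJ (Finset.mem_of_mem_erase h)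
      refine ⟨Finset.mem_filter.mpr ⟨(hmemS _).mpr ?_, ?_⟩, Finset.mem_insert_self _ _⟩
      · rw [Finset.card_insert_of_notMem hjE, Finset.card_erase_of_mem hiJ, hJcard]
        omega
      · simp only [Finset.mem_insert, Finset.mem_erase]
        push_neg
        exact ⟨hji.symm, fun h => absurd rfl h⟩
    · rintro ⟨Q, j⟩ hp
      simp only [Finset.mem_sigma] at hp ⊢
      obtain ⟨hQ, hj⟩ := hp
      obtain ⟨hQS, hiQ⟩ := Finset.mem_filter.mp hQ
      have hQcard := (hmemS Q).mp hQS
      have hji : j ≠ i := fun h => hiQ (h ▸ hj)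
      have hiE : i ∉ Q.erase j := fun h => hiQ (Finset.mem_of_mem_erase h)
      refine ⟨Finset.mem_filter.mpr ⟨(hmemS _).mpr ?_, Finset.mem_insert_self _ _⟩, ?_⟩
      · rw [Finset.card_insert_of_notMem hiE, Finset.card_erase_of_mem hj, hQcard]
        omega
      · simp only [Finset.mem_compl, Finset.mem_insert, Finset.mem_erase]
        push_neg
        exact ⟨hji, fun h => absurd rfl h⟩
    · rintro ⟨J, j⟩ hp
      simp only [Finset.mem_sigma] at hp
      obtain ⟨hJ, hj⟩ := hp
      obtain ⟨hJS, hiJ⟩ := Finset.mem_filter.mp hJ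
      have hjJ : j ∉ J := Finset.mem_compl.mp hj
      have hjE : j ∉ J.erase i := fun h => hjJ (Finset.mem_of_mem_erase h)
      have hji : j ≠ i := fun h => hjJ (h ▸ hiJ)
      simp only [Sigma.mk.inj_iff, heq_eq_eq, and_true]
      rw [Finset.erase_insert hjE, Finset.insert_erase hiJ]
    · rintro ⟨Q, j⟩ hp
      simp only [Finset.mem_sigma] at hp
      obtain ⟨hQ, hj⟩ := hp
      obtain ⟨hQS, hiQ⟩ := Finset.mem_filter.mp hQ
      have hiE : i ∉ Q.erase j := fun h => hiQ (Finset.mem_of_mem_erase h)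
      have hji : j ≠ i := fun h => hiQ (h ▸ hj)
      simp only [Sigma.mk.inj_iff, heq_eq_eq, and_true]
      rw [Finset.erase_insert hiE, Finset.insert_erase hj]
    · rintro ⟨J, j⟩ _
      rfl
  -- counting on the right
  have hright : ∑ Q ∈ S2, ∑ _j ∈ Q, g Q
      = (n : ℝ) * Real.exp εs * (∑ Q ∈ S2, A (Multiset.map D' Q.val) F)
        + (n : ℝ) * S2.card * δ := by
    have h1 : ∀ Q ∈ S2, ∑ _j ∈ Q, g Q = (n : ℝ) * g Q := fun Q hQ => by
      rw [Finset.sum_const, (hmemS Q).mp (Finset.mem_filter.mp hQ).1, nsmul_eq_mul]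
    rw [Finset.sum_congr rfl h1]
    rw [hg]
    simp only
    rw [show ∀ (c : Finset (Fin t) → ℝ), (∑ Q ∈ S2, (n : ℝ) * (Real.exp εs * c Q + δ))
        = ∑ Q ∈ S2, (((n : ℝ) * Real.exp εs) * c Q + (n : ℝ) * δ) from
      fun c => Finset.sum_congr rfl fun Q _ => by ring]
    rw [Finset.sum_add_distrib, ← Finset.mul_sum, Finset.sum_const, nsmul_eq_mul]
    ring
  -- key inequality
  have key : ((t - n : ℕ) : ℝ) * ∑ J ∈ S1, A (Multiset.map D J.val) F
      ≤ (n : ℝ) * Real.exp εs * (∑ Q ∈ S2, A (Multiset.map D' Q.val) F)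
        + (n : ℝ) * S2.card * δ := by
    rw [hleft, ← hright, ← hreindex]
    exact Finset.sum_le_sum fun J hJ => Finset.sum_le_sum fun j hj => hpt J hJ j hj
  -- final arithmetic
  have hNpos : (0 : ℝ) < S.card := by
    rw [hNcard]; exact_mod_cast Nat.choose_pos hnt.le
  have hMpos : (0 : ℝ) < S2.card := by
    rw [hMcard]; exact_mod_cast Nat.choose_pos (by omega : n ≤ t - 1)
  have htpos : (0 : ℝ) < t := by exact_mod_cast Nat.pos_of_ne_zero (by omega)
  have htM : (t : ℝ) * S2.card = ((t : ℝ) - n) * S.card := by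
    have h' : ((t - n) * t.choose n : ℕ) = (t * (t - 1).choose n : ℕ) := hid
    have hc : (((t - n : ℕ) : ℝ)) = (t : ℝ) - n := by
      rw [Nat.cast_sub hnt.le]
    rw [hNcard, hMcard, ← hc]
    exact_mod_cast h'.symm
  have key' : ((t : ℝ) - n) * ∑ J ∈ S1, A (Multiset.map D J.val) F
      ≤ (n : ℝ) * Real.exp εs * (∑ Q ∈ S2, A (Multiset.map D' Q.val) F)
        + (n : ℝ) * S2.card * δ := by
    rwa [Nat.cast_sub hnt.le] at key
  set a := ∑ J ∈ S1, A (Multiset.map D J.val) F with ha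
  set b := ∑ Q ∈ S2, A (Multiset.map D' Q.val) F with hb
  rw [div_le_iff₀ hNpos]
  have hfrac : ((n : ℝ) / t) * Real.exp εs * (b / S2.card) + ((n : ℝ) / t) * δ
      = ((n : ℝ) * Real.exp εs * b + (n : ℝ) * S2.card * δ) / ((t : ℝ) * S2.card) := by
    field_simp
  rw [hfrac, div_mul_eq_mul_div, le_div_iff₀ (mul_pos htpos hMpos)]
  calc a * ((t : ℝ) * S2.card) = a * (((t : ℝ) - n) * S.card) := by rw [htM]
    _ = (((t : ℝ) - n) * a) * S.card := by ring
    _ ≤ ((n : ℝ) * Real.exp εs * b + (n : ℝ) * S2.card * δ) * S.card :=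
        mul_le_mul_of_nonneg_right key' hNpos.le
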